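/- arXiv:1703.04941 — 2 statements merged into one kernel-verified Lean document; each statement's English description precedes it below -/
import Mathlib

section
/- Let N be an n-bit binary counter, let R be a valid configuration of N, and let u ∈ L_inc = ι_sync (ι_dec ι_rotr ι_off)* ι_inc (ι_off ι_rotr)* ι_sync be such that |R·u| = |R|. If v is the value of the counter under R and v′ is the value under R·u, then v′ = v + 1 ≤ 2^n − 1. -/
/-- Partial transformations on `Q` (partial functions `Q → Q`), with
left-to-right composition: `q·(fg) = (q·f)·g`. -/
def PTrans (Q : Type*) : Type _ := Q → Option Q

/-- The image `R·f` of a configuration `R` under a partial transformation `f`. -/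
def pApply {Q : Type*} (R : Set Q) (f : PTrans Q) : Set Q :=
  {q' | ∃ q ∈ R, f q = some q'}

/-- The image `R·u` of a configuration under a word of partial transformations. -/
def wordApply {Q : Type*} (R : Set Q) (u : List (PTrans Q)) : Set Q :=
  u.foldl pApply R

/-! ### The `n`-bit binary counter
Cells: `(0, i) = dᵢ` (tape `S`), `(1, i) = cᵢ` (tape `T`), `(2, i) = c̄ᵢ`
(tape `T̄`). -/

variable (n : ℕ) [NeZero n]

/-- The cell `dᵢ` of the tape `S`. -/
def dCell (i : Fin n) : Fin 3 × Fin n := (0, i)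

/-- The cell `cᵢ` of the tape `T`. -/
def cCell (i : Fin n) : Fin 3 × Fin n := (1, i)

/-- The cell `c̄ᵢ` of the tape `T̄`. -/
def cbarCell (i : Fin n) : Fin 3 × Fin n := (2, i)

/-- `ι_rotl` : cyclic left rotation on all three tapes. -/
def rotl : PTrans (Fin 3 × Fin n) := fun x => some (x.1, x.2 + 1)

/-- `ι_rotr` : cyclic right rotation on all three tapes. -/
def rotr : PTrans (Fin 3 × Fin n) := fun x => some (x.1, x.2 - 1)

/-- `ι_{=0}` : undefined on `c₀`, identity on all other cells. -/
def eqz : PTrans (Fin 3 × Fin n) := fun x => if x = cCell n 0 then none else some x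

/-- `ι_{=1}` : undefined on `c̄₀`, identity on all other cells. -/
def eqo : PTrans (Fin 3 × Fin n) := fun x => if x = cbarCell n 0 then none else some x

/-- `ι_sync` : undefined on `d₁, …, d_{n-1}`, identity on all other cells. -/
def syncI : PTrans (Fin 3 × Fin n) :=
  fun x => if x.1 = 0 ∧ x.2 ≠ 0 then none else some x

/-- `ι_off` : undefined on `d₀`, identity on all other cells. -/
def offI : PTrans (Fin 3 × Fin n) := fun x => if x = dCell n 0 then none else some x

/-- `ι_inc` : maps `c̄₀` to `c₀`, undefined on `c₀`, identity elsewhere. -/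
def incI : PTrans (Fin 3 × Fin n) :=
  fun x => if x = cbarCell n 0 then some (cCell n 0)
    else if x = cCell n 0 then none else some x

/-- `ι_dec` : maps `c₀` to `c̄₀`, undefined on `c̄₀`, identity elsewhere. -/
def decI : PTrans (Fin 3 × Fin n) :=
  fun x => if x = cCell n 0 then some (cbarCell n 0)
    else if x = cbarCell n 0 then none else some x

/-- The instruction set of the `n`-bit binary counter. -/
def counterI : Set (PTrans (Fin 3 × Fin n)) :=
  {rotl n, rotr n, eqz n, eqo n, syncI n, offI n, incI n, decI n}

/-- A configuration is valid if it contains exactly one cell of the tape `S` and,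
for each `i`, exactly one of `cᵢ`, `c̄ᵢ`. -/
def ValidConf (R : Set (Fin 3 × Fin n)) : Prop :=
  (∃! i : Fin n, dCell n i ∈ R) ∧ ∀ i : Fin n, (cCell n i ∈ R ↔ cbarCell n i ∉ R)

open Classical in
/-- The value of the counter under a configuration `R`: `Σ_{i : cᵢ ∈ R} 2^i`. -/
noncomputable def counterValue (R : Set (Fin 3 × Fin n)) : ℕ :=
  ∑ i : Fin n, if cCell n i ∈ R then 2 ^ (i : ℕ) else 0

/-- Membership in the regular language
`L_reset = ι_sync ((ι_{=0} | ι_dec) ι_rotr ι_off)* (ι_{=0} | ι_dec) ι_rotr ι_sync`. -/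
def memLreset (u : List (PTrans (Fin 3 × Fin n))) : Prop :=
  ∃ (bs : List (PTrans (Fin 3 × Fin n))) (b : PTrans (Fin 3 × Fin n)),
    (∀ x ∈ bs, x = eqz n ∨ x = decI n) ∧ (b = eqz n ∨ b = decI n) ∧
    u = syncI n ::
      ((bs.map fun x => [x, rotr n, offI n]).flatten ++ [b, rotr n, syncI n])

/-- Membership in the regular language
`L_inc = ι_sync (ι_dec ι_rotr ι_off)* ι_inc (ι_off ι_rotr)* ι_sync`. -/
def memLinc (u : List (PTrans (Fin 3 × Fin n))) : Prop :=
  ∃ k m : ℕ,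
    u = syncI n ::
      ((List.replicate k [decI n, rotr n, offI n]).flatten ++
        incI n :: ((List.replicate m [offI n, rotr n]).flatten ++ [syncI n]))

/-- Membership in the regular language
`L_dec = ι_sync (ι_inc ι_rotr ι_off)* ι_dec (ι_off ι_rotr)* ι_sync`. -/
def memLdec (u : List (PTrans (Fin 3 × Fin n))) : Prop :=
  ∃ k m : ℕ,
    u = syncI n ::
      ((List.replicate k [incI n, rotr n, offI n]).flatten ++
        decI n :: ((List.replicate m [offI n, rotr n]).flatten ++ [syncI n]))

open Fin.NatCast Fin.CommRing

section AuxCounter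

variable {n : ℕ} [NeZero n]

/-! #### Generic cardinality lemmas -/

lemma counter_pApply_ncard_le {Q : Type*} [Finite Q] [Nonempty Q] (R : Set Q) (f : PTrans Q) :
    (pApply R f).ncard ≤ R.ncard := by
  obtain ⟨d⟩ := (inferInstance : Nonempty Q)
  have hsub : pApply R f ⊆ (fun q => (f q).getD d) '' R := by
    rintro q' ⟨q, hq, hfq⟩
    exact ⟨q, hq, by simp [hfq]⟩
  exact le_trans (Set.ncard_le_ncard hsub (Set.toFinite _)) (Set.ncard_image_le (Set.toFinite _))

lemma counter_total {Q : Type*} [Finite Q] [Nonempty Q] {R : Set Q} {f : PTrans Q}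
    (h : (pApply R f).ncard = R.ncard) : ∀ q ∈ R, f q ≠ none := by
  intro q0 hq0 hnone
  have hsub : pApply R f ⊆ pApply (R \ {q0}) f := by
    rintro q' ⟨q, hq, hfq⟩
    refine ⟨q, ⟨hq, fun hqe => ?_⟩, hfq⟩
    rw [Set.mem_singleton_iff] at hqe
    subst hqe
    rw [hnone] at hfq
    exact nomatch hfq
  have h1 : (pApply (R \ {q0}) f).ncard ≤ (R \ {q0}).ncard := counter_pApply_ncard_le _ _
  have h2 : (R \ {q0}).ncard < R.ncard :=
    Set.ncard_diff_singleton_lt_of_mem hq0 (Set.toFinite _)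
  have h3 : (pApply R f).ncard ≤ (pApply (R \ {q0}) f).ncard :=
    Set.ncard_le_ncard hsub (Set.toFinite _)
  omega

lemma counter_wordApply_cons {Q : Type*} (R : Set Q) (f : PTrans Q) (v : List (PTrans Q)) :
    wordApply R (f :: v) = wordApply (pApply R f) v := rfl

lemma counter_wordApply_ncard_le {Q : Type*} [Finite Q] [Nonempty Q] (u : List (PTrans Q)) :
    ∀ R : Set Q, (wordApply R u).ncard ≤ R.ncard := by
  induction u with
  | nil => intro R; exact le_rfl
  | cons f v ih => intro R; exact le_trans (ih _) (counter_pApply_ncard_le R f)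

lemma counter_chain {Q : Type*} [Finite Q] [Nonempty Q] {R : Set Q} {f : PTrans Q}
    {v : List (PTrans Q)} (h : (wordApply R (f :: v)).ncard = R.ncard) :
    (pApply R f).ncard = R.ncard ∧ (wordApply (pApply R f) v).ncard = (pApply R f).ncard := by
  have h1 := counter_wordApply_ncard_le v (pApply R f)
  have h2 := counter_pApply_ncard_le R f
  rw [counter_wordApply_cons] at h
  omega

end AuxCounter
section ConfCounter
set_option linter.unusedSectionVars false

variable {n : ℕ} [NeZero n]

/-- The canonical configuration with bit predicate `b` and head position `p`. -/
def conf (n : ℕ) (b : Fin n → Prop) (p : Fin n) : Set (Fin 3 × Fin n) :=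
  {x | (x.1 = 0 ∧ x.2 = p) ∨ (x.1 = 1 ∧ b x.2) ∨ (x.1 = 2 ∧ ¬ b x.2)}

lemma fin3_cases : ∀ t : Fin 3, t = 0 ∨ t = 1 ∨ t = 2 := by decide

lemma mem_conf {b : Fin n → Prop} {p : Fin n} {x : Fin 3 × Fin n} :
    x ∈ conf n b p ↔ (x.1 = 0 ∧ x.2 = p) ∨ (x.1 = 1 ∧ b x.2) ∨ (x.1 = 2 ∧ ¬ b x.2) := Iff.rfl

lemma mem_conf_d {b : Fin n → Prop} {p : Fin n} (i : Fin n) :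
    dCell n i ∈ conf n b p ↔ i = p := by
  simp [conf, dCell, show (0:Fin 3) ≠ 1 from by decide, show (0:Fin 3) ≠ 2 from by decide]

lemma mem_conf_c {b : Fin n → Prop} {p : Fin n} (i : Fin n) :
    cCell n i ∈ conf n b p ↔ b i := by
  simp [conf, cCell, show (1:Fin 3) ≠ 0 from by decide, show (1:Fin 3) ≠ 2 from by decide]

lemma mem_conf_cbar {b : Fin n → Prop} {p : Fin n} (i : Fin n) :
    cbarCell n i ∈ conf n b p ↔ ¬ b i := by
  simp [conf, cbarCell, show (2:Fin 3) ≠ 0 from by decide, show (2:Fin 3) ≠ 1 from by decide]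

lemma conf_congr {b b' : Fin n → Prop} {p : Fin n} (h : ∀ i, b i ↔ b' i) :
    conf n b p = conf n b' p := by
  ext x
  simp only [conf, Set.mem_setOf_eq, h]

lemma valid_eq_conf {R : Set (Fin 3 × Fin n)} (hR : ValidConf n R) :
    ∃ p : Fin n, R = conf n (fun i => cCell n i ∈ R) p := by
  obtain ⟨⟨p, hp, hup⟩, hc⟩ := hR
  refine ⟨p, ?_⟩
  ext ⟨t, i⟩
  rcases fin3_cases t with rfl | rfl | rfl
  · rw [show ((0:Fin 3), i) = dCell n i from rfl, mem_conf_d]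
    constructor
    · intro h; exact hup i h
    · rintro rfl; exact hp
  · rw [show ((1:Fin 3), i) = cCell n i from rfl, mem_conf_c]
  · rw [show ((2:Fin 3), i) = cbarCell n i from rfl, mem_conf_cbar]
    rw [hc i]
    exact not_not.symm

end ConfCounter
section InstrCounter
set_option linter.unusedSectionVars false

variable {n : ℕ} [NeZero n]

lemma counter_subid_sync (q : Fin 3 × Fin n) : syncI n q = none ∨ syncI n q = some q := by
  unfold syncI; split <;> simp

lemma counter_subid_off (q : Fin 3 × Fin n) : offI n q = none ∨ offI n q = some q := by
  unfold offI; split <;> simp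

lemma pApply_subid {f : PTrans (Fin 3 × Fin n)} {R : Set (Fin 3 × Fin n)}
    (hf : ∀ q, f q = none ∨ f q = some q) (h : ∀ q ∈ R, f q ≠ none) : pApply R f = R := by
  ext q'
  constructor
  · rintro ⟨q, hq, hfq⟩
    rcases hf q with h0 | h0 <;> rw [h0] at hfq
    · exact nomatch hfq
    · rwa [← Option.some.inj hfq]
  · intro hq'
    refine ⟨q', hq', ?_⟩
    rcases hf q' with h0 | h0
    · exact absurd h0 (h q' hq')
    · exact h0

lemma sync_pos {b : Fin n → Prop} {p : Fin n} (h : ∀ q ∈ conf n b p, syncI n q ≠ none) :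
    p = 0 := by
  by_contra hp
  have hmem : ((0 : Fin 3), p) ∈ conf n b p := Or.inl ⟨rfl, rfl⟩
  apply h _ hmem
  unfold syncI
  exact if_pos ⟨rfl, hp⟩

lemma off_pos {b : Fin n → Prop} {p : Fin n} (h : ∀ q ∈ conf n b p, offI n q ≠ none) :
    p ≠ 0 := by
  intro hp; subst hp
  have hmem : ((0 : Fin 3), (0 : Fin n)) ∈ conf n b 0 := Or.inl ⟨rfl, rfl⟩
  apply h _ hmem
  unfold offI
  exact if_pos rfl

lemma dec_bit {b : Fin n → Prop} {p : Fin n} (h : ∀ q ∈ conf n b p, decI n q ≠ none) :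
    b 0 := by
  by_contra hb
  have hmem : cbarCell n 0 ∈ conf n b p := (mem_conf_cbar 0).mpr hb
  apply h _ hmem
  unfold decI
  rw [if_neg (by simp [cCell, cbarCell, Prod.ext_iff]), if_pos rfl]

lemma inc_bit {b : Fin n → Prop} {p : Fin n} (h : ∀ q ∈ conf n b p, incI n q ≠ none) :
    ¬ b 0 := by
  intro hb
  have hmem : cCell n 0 ∈ conf n b p := (mem_conf_c 0).mpr hb
  apply h _ hmem
  unfold incI
  rw [if_neg (by simp [cCell, cbarCell, Prod.ext_iff]), if_pos rfl]

lemma ne_cCell_of_fst {x : Fin 3 × Fin n} (h : x.1 ≠ 1) : x ≠ cCell n 0 :=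
  fun he => h (by rw [he]; rfl)

lemma ne_cbarCell_of_fst {x : Fin 3 × Fin n} (h : x.1 ≠ 2) : x ≠ cbarCell n 0 :=
  fun he => h (by rw [he]; rfl)

lemma ne_cCell_of_snd {x : Fin 3 × Fin n} (h : x.2 ≠ 0) : x ≠ cCell n 0 :=
  fun he => h (by rw [he]; rfl)

lemma ne_cbarCell_of_snd {x : Fin 3 × Fin n} (h : x.2 ≠ 0) : x ≠ cbarCell n 0 :=
  fun he => h (by rw [he]; rfl)

lemma fst_eq_of_eq_zero {x : Fin 3 × Fin n} (h : x.1 = 0) :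
    x ≠ cCell n 0 ∧ x ≠ cbarCell n 0 :=
  ⟨ne_cCell_of_fst (by rw [h]; decide), ne_cbarCell_of_fst (by rw [h]; decide)⟩

lemma pApply_rotr_conf (b : Fin n → Prop) (p : Fin n) :
    pApply (conf n b p) (rotr n) = conf n (fun i => b (i + 1)) (p - 1) := by
  ext x
  constructor
  · rintro ⟨q, hq, hfq⟩
    have hx : x = (q.1, q.2 - 1) := (Option.some.inj hfq).symm
    subst hx
    rcases hq with ⟨h1, h2⟩ | ⟨h1, h2⟩ | ⟨h1, h2⟩
    · exact Or.inl ⟨h1, by rw [h2]⟩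
    · refine Or.inr (Or.inl ⟨h1, ?_⟩)
      show b (q.2 - 1 + 1)
      rwa [sub_add_cancel]
    · refine Or.inr (Or.inr ⟨h1, ?_⟩)
      show ¬ b (q.2 - 1 + 1)
      rwa [sub_add_cancel]
  · intro hx
    refine ⟨(x.1, x.2 + 1), ?_, ?_⟩
    · rcases hx with ⟨h1, h2⟩ | ⟨h1, h2⟩ | ⟨h1, h2⟩
      · refine Or.inl ⟨h1, ?_⟩
        show x.2 + 1 = p
        rw [h2, sub_add_cancel]
      · exact Or.inr (Or.inl ⟨h1, h2⟩)
      · exact Or.inr (Or.inr ⟨h1, h2⟩)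
    · show some ((x.1, x.2 + 1).1, (x.1, x.2 + 1).2 - 1) = some x
      simp

lemma pApply_dec_conf {b : Fin n → Prop} {p : Fin n} (hb : b 0) :
    pApply (conf n b p) (decI n) = conf n (fun i => b i ∧ i ≠ 0) p := by
  ext x
  constructor
  · rintro ⟨q, hq, hfq⟩
    unfold decI at hfq
    by_cases h1 : q = cCell n 0
    · rw [if_pos h1] at hfq
      have hx := (Option.some.inj hfq).symm
      subst hx
      exact Or.inr (Or.inr ⟨rfl, by simp [cbarCell]⟩)
    · rw [if_neg h1] at hfq
      by_cases h2 : q = cbarCell n 0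
      · rw [if_pos h2] at hfq
        exact nomatch hfq
      · rw [if_neg h2] at hfq
        have hx := Option.some.inj hfq
        subst hx
        rcases hq with ⟨ha, hb2⟩ | ⟨ha, hb2⟩ | ⟨ha, hb2⟩
        · exact Or.inl ⟨ha, hb2⟩
        · refine Or.inr (Or.inl ⟨ha, hb2, fun h0 => h1 ?_⟩)
          exact Prod.ext ha h0
        · exact Or.inr (Or.inr ⟨ha, fun hc => hb2 hc.1⟩)
  · intro hx
    rcases hx with ⟨h1, h2⟩ | ⟨h1, h2⟩ | ⟨h1, h2⟩
    · obtain ⟨hne1, hne2⟩ := fst_eq_of_eq_zero h1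
      exact ⟨x, Or.inl ⟨h1, h2⟩, by unfold decI; rw [if_neg hne1, if_neg hne2]⟩
    · refine ⟨x, Or.inr (Or.inl ⟨h1, h2.1⟩), ?_⟩
      unfold decI
      rw [if_neg (ne_cCell_of_snd h2.2), if_neg (ne_cbarCell_of_fst (by rw [h1]; decide))]
    · by_cases h0 : x.2 = 0
      · refine ⟨cCell n 0, Or.inr (Or.inl ⟨rfl, hb⟩), ?_⟩
        unfold decI
        rw [if_pos rfl]
        exact congrArg some (Prod.ext h1 h0).symm
      · have hnb : ¬ b x.2 := fun hbb => h2 ⟨hbb, h0⟩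
        refine ⟨x, Or.inr (Or.inr ⟨h1, hnb⟩), ?_⟩
        unfold decI
        rw [if_neg (ne_cCell_of_snd h0), if_neg (ne_cbarCell_of_snd h0)]

lemma pApply_inc_conf {b : Fin n → Prop} {p : Fin n} (hb : ¬ b 0) :
    pApply (conf n b p) (incI n) = conf n (fun i => b i ∨ i = 0) p := by
  ext x
  constructor
  · rintro ⟨q, hq, hfq⟩
    unfold incI at hfq
    by_cases h1 : q = cbarCell n 0
    · rw [if_pos h1] at hfq
      have hx := (Option.some.inj hfq).symm
      subst hx
      exact Or.inr (Or.inl ⟨rfl, Or.inr rfl⟩)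
    · rw [if_neg h1] at hfq
      by_cases h2 : q = cCell n 0
      · rw [if_pos h2] at hfq
        exact nomatch hfq
      · rw [if_neg h2] at hfq
        have hx := Option.some.inj hfq
        subst hx
        rcases hq with ⟨ha, hb2⟩ | ⟨ha, hb2⟩ | ⟨ha, hb2⟩
        · exact Or.inl ⟨ha, hb2⟩
        · exact Or.inr (Or.inl ⟨ha, Or.inl hb2⟩)
        · refine Or.inr (Or.inr ⟨ha, fun hc => ?_⟩)
          rcases hc with hc | hc
          · exact hb2 hc
          · exact h1 (Prod.ext ha hc)
  · intro hx
    rcases hx with ⟨h1, h2⟩ | ⟨h1, h2⟩ | ⟨h1, h2⟩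
    · obtain ⟨hne1, hne2⟩ := fst_eq_of_eq_zero h1
      exact ⟨x, Or.inl ⟨h1, h2⟩, by unfold incI; rw [if_neg hne2, if_neg hne1]⟩
    · by_cases h0 : x.2 = 0
      · refine ⟨cbarCell n 0, Or.inr (Or.inr ⟨rfl, hb⟩), ?_⟩
        unfold incI
        rw [if_pos rfl]
        exact congrArg some (Prod.ext h1 h0).symm
      · have hbx : b x.2 := by
          rcases h2 with h2 | h2
          · exact h2
          · exact absurd h2 h0
        refine ⟨x, Or.inr (Or.inl ⟨h1, hbx⟩), ?_⟩
        unfold incI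
        rw [if_neg (ne_cbarCell_of_snd h0), if_neg (ne_cCell_of_snd h0)]
    · have hnbx : ¬ b x.2 := fun hbb => h2 (Or.inl hbb)
      have hx0 : x.2 ≠ 0 := fun h0 => h2 (Or.inr h0)
      refine ⟨x, Or.inr (Or.inr ⟨h1, hnbx⟩), ?_⟩
      unfold incI
      rw [if_neg (ne_cbarCell_of_snd hx0), if_neg (ne_cCell_of_snd hx0)]

end InstrCounter
section PhaseCounter
set_option linter.unusedSectionVars false

variable {n : ℕ} [NeZero n]

lemma val_add_natCast (i : Fin n) (k : ℕ) :
    ((i + (k : Fin n)) : Fin n).val = (i.val + k) % n := by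
  rw [Fin.val_add, Fin.val_natCast]
  simp [Nat.add_mod, Nat.mod_eq_of_lt i.isLt]

lemma fin_step_iff (i : Fin n) (k : ℕ) :
    ((i + (k : Fin n) + 1 : Fin n) ≠ 0 ∧ i.val + k < n) ↔ i.val + k + 1 < n := by
  have hcast : (i + (k : Fin n) + 1 : Fin n) = i + (((k + 1 : ℕ)) : Fin n) := by
    push_cast
    ring
  have hval : ((i + (k : Fin n) + 1 : Fin n)).val = (i.val + (k + 1)) % n := by
    rw [hcast, val_add_natCast]
  have hne : (i + (k : Fin n) + 1 : Fin n) ≠ 0 ↔ (i.val + (k + 1)) % n ≠ 0 := by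
    rw [Ne, Fin.ext_iff, hval]
    simp
  rw [hne]
  constructor
  · rintro ⟨h1, h2⟩
    rcases (show i.val + k + 1 ≤ n by omega).lt_or_eq with h | h
    · exact h
    · exfalso
      apply h1
      rw [show i.val + (k + 1) = n by omega, Nat.mod_self]
  · intro h
    refine ⟨?_, by omega⟩
    rw [Nat.mod_eq_of_lt (by omega)]
    omega

/-- Phase 1: the `(ι_dec ι_rotr ι_off)^k` part. -/
lemma counter_phase1 (k : ℕ) : ∀ (b : Fin n → Prop) (p : Fin n)
    (w : List (PTrans (Fin 3 × Fin n))),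
    (wordApply (conf n b p) ((List.replicate k [decI n, rotr n, offI n]).flatten ++ w)).ncard
      = (conf n b p).ncard →
    ((∀ l, l < k → b ↑l ∧ (p - ↑(l + 1)) ≠ 0) ∧
     wordApply (conf n b p) ((List.replicate k [decI n, rotr n, offI n]).flatten ++ w)
       = wordApply (conf n (fun i => b (i + (k : Fin n)) ∧ i.val + k < n) (p - (k : Fin n))) w ∧
     (wordApply (conf n (fun i => b (i + (k : Fin n)) ∧ i.val + k < n) (p - (k : Fin n))) w).ncard
       = (conf n (fun i => b (i + (k : Fin n)) ∧ i.val + k < n) (p - (k : Fin n))).ncard) := by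
  induction k with
  | zero =>
    intro b p w h
    have hc : conf n (fun i => b (i + ((0 : ℕ) : Fin n)) ∧ i.val + 0 < n) (p - ((0 : ℕ) : Fin n))
        = conf n b p := by
      rw [Nat.cast_zero, sub_zero]
      exact conf_congr fun i => by simp [i.isLt]
    refine ⟨fun l hl => absurd hl (by omega), ?_, ?_⟩ <;> rw [hc] <;> simpa using h
  | succ k ih =>
    intro b p w h
    have hw : (List.replicate (k + 1) [decI n, rotr n, offI n]).flatten ++ w
        = decI n :: rotr n :: offI n ::
            ((List.replicate k [decI n, rotr n, offI n]).flatten ++ w) := by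
      simp [List.replicate_succ]
    rw [hw] at h ⊢
    obtain ⟨h1, h2⟩ := counter_chain h
    have hb0 : b 0 := dec_bit (counter_total h1)
    have e1 : pApply (conf n b p) (decI n) = conf n (fun i => b i ∧ i ≠ 0) p :=
      pApply_dec_conf hb0
    rw [counter_wordApply_cons, e1]
    rw [e1] at h2
    obtain ⟨h3, h4⟩ := counter_chain h2
    have e2 : pApply (conf n (fun i => b i ∧ i ≠ 0) p) (rotr n)
        = conf n (fun i => b (i + 1) ∧ (i + 1) ≠ 0) (p - 1) := pApply_rotr_conf _ _
    rw [counter_wordApply_cons, e2]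
    rw [e2] at h4
    obtain ⟨h5, h6⟩ := counter_chain h4
    have hp1 : p - 1 ≠ 0 := off_pos (counter_total h5)
    have e3 : pApply (conf n (fun i => b (i + 1) ∧ (i + 1) ≠ 0) (p - 1)) (offI n)
        = conf n (fun i => b (i + 1) ∧ (i + 1) ≠ 0) (p - 1) :=
      pApply_subid counter_subid_off (counter_total h5)
    rw [counter_wordApply_cons, e3]
    rw [e3] at h6
    obtain ⟨hfacts, heq, hcard'⟩ := ih (fun i => b (i + 1) ∧ (i + 1) ≠ 0) (p - 1) w h6
    have hpos : p - 1 - (k : Fin n) = p - ((k + 1 : ℕ) : Fin n) := by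
      push_cast
      ring
    have hcc : conf n (fun i => (b (i + (k : Fin n) + 1) ∧ (i + (k : Fin n) + 1) ≠ 0)
          ∧ i.val + k < n) (p - 1 - (k : Fin n))
        = conf n (fun i => b (i + ((k + 1 : ℕ) : Fin n)) ∧ i.val + (k + 1) < n)
            (p - ((k + 1 : ℕ) : Fin n)) := by
      rw [hpos]
      refine conf_congr fun i => ?_
      have harg : i + (k : Fin n) + 1 = i + ((k + 1 : ℕ) : Fin n) := by
        push_cast
        ring
      have := fin_step_iff i k
      rw [harg] at this ⊢
      constructor
      · rintro ⟨⟨hb1, hb2⟩, hb3⟩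
        have h' := this.mp ⟨hb2, hb3⟩
        exact ⟨hb1, by omega⟩
      · rintro ⟨hb1, hb2⟩
        obtain ⟨hb3, hb4⟩ := this.mpr (by omega)
        exact ⟨⟨hb1, hb3⟩, hb4⟩
    constructor
    · intro l hl
      rcases Nat.eq_zero_or_pos l with rfl | hlpos
      · refine ⟨by rwa [Nat.cast_zero], by rwa [show ((0 + 1 : ℕ) : Fin n) = 1 by push_cast; ring]⟩
      · obtain ⟨l', rfl⟩ := Nat.exists_eq_succ_of_ne_zero (show l ≠ 0 by omega)
        obtain ⟨hbl, hpl⟩ := hfacts l' (by omega)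
        constructor
        · have : ((l' + 1 : ℕ) : Fin n) = (l' : Fin n) + 1 := by push_cast; ring
          rw [this]
          exact hbl.1
        · have : p - ((l' + 1 + 1 : ℕ) : Fin n) = p - 1 - ((l' + 1 : ℕ) : Fin n) := by
            push_cast
            ring
          rwa [this]
    · constructor
      · rw [heq, hcc]
      · rw [← hcc]
        exact hcard'
end PhaseCounter
section Phase2Counter
set_option linter.unusedSectionVars false

variable {n : ℕ} [NeZero n]

/-- Phase 2: the `(ι_off ι_rotr)^m` part. -/
lemma counter_phase2 (m : ℕ) : ∀ (b : Fin n → Prop) (p : Fin n)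
    (w : List (PTrans (Fin 3 × Fin n))),
    (wordApply (conf n b p) ((List.replicate m [offI n, rotr n]).flatten ++ w)).ncard
      = (conf n b p).ncard →
    ((∀ l, l < m → (p - ↑l) ≠ 0) ∧
     wordApply (conf n b p) ((List.replicate m [offI n, rotr n]).flatten ++ w)
       = wordApply (conf n (fun i => b (i + (m : Fin n))) (p - (m : Fin n))) w ∧
     (wordApply (conf n (fun i => b (i + (m : Fin n))) (p - (m : Fin n))) w).ncard
       = (conf n (fun i => b (i + (m : Fin n))) (p - (m : Fin n))).ncard) := by
  induction m with
  | zero =>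
    intro b p w h
    have hc : conf n (fun i => b (i + ((0 : ℕ) : Fin n))) (p - ((0 : ℕ) : Fin n))
        = conf n b p := by
      rw [Nat.cast_zero, sub_zero]
      exact conf_congr fun i => by simp
    refine ⟨fun l hl => absurd hl (by omega), ?_, ?_⟩ <;> rw [hc] <;> simpa using h
  | succ m ih =>
    intro b p w h
    have hw : (List.replicate (m + 1) [offI n, rotr n]).flatten ++ w
        = offI n :: rotr n :: ((List.replicate m [offI n, rotr n]).flatten ++ w) := by
      simp [List.replicate_succ]
    rw [hw] at h ⊢
    obtain ⟨h1, h2⟩ := counter_chain h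
    have hp0 : p ≠ 0 := off_pos (counter_total h1)
    have e1 : pApply (conf n b p) (offI n) = conf n b p :=
      pApply_subid counter_subid_off (counter_total h1)
    rw [counter_wordApply_cons, e1]
    rw [e1] at h2
    obtain ⟨h3, h4⟩ := counter_chain h2
    have e2 : pApply (conf n b p) (rotr n) = conf n (fun i => b (i + 1)) (p - 1) :=
      pApply_rotr_conf _ _
    rw [counter_wordApply_cons, e2]
    rw [e2] at h4
    obtain ⟨hfacts, heq, hcard'⟩ := ih (fun i => b (i + 1)) (p - 1) w h4
    have hpos : p - 1 - (m : Fin n) = p - ((m + 1 : ℕ) : Fin n) := by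
      push_cast
      ring
    have hcc : conf n (fun i => b (i + (m : Fin n) + 1)) (p - 1 - (m : Fin n))
        = conf n (fun i => b (i + ((m + 1 : ℕ) : Fin n))) (p - ((m + 1 : ℕ) : Fin n)) := by
      rw [hpos]
      refine conf_congr fun i => ?_
      have harg : i + (m : Fin n) + 1 = i + ((m + 1 : ℕ) : Fin n) := by
        push_cast
        ring
      rw [harg]
    constructor
    · intro l hl
      rcases Nat.eq_zero_or_pos l with rfl | hlpos
      · rwa [Nat.cast_zero, sub_zero]
      · obtain ⟨l', rfl⟩ := Nat.exists_eq_succ_of_ne_zero (show l ≠ 0 by omega)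
        have := hfacts l' (by omega)
        have harg : p - ((l' + 1 : ℕ) : Fin n) = p - 1 - (l' : Fin n) := by
          push_cast
          ring
        rwa [harg]
    · constructor
      · rw [heq, hcc]
      · rw [← hcc]
        exact hcard'

lemma counter_wordApply_single (R : Set (Fin 3 × Fin n)) (f : PTrans (Fin 3 × Fin n)) :
    wordApply R [f] = pApply R f := rfl

lemma geom_two_sum : ∀ k : ℕ, ∑ j ∈ Finset.range k, 2 ^ j = 2 ^ k - 1 := by
  intro k
  induction k with
  | zero => rfl
  | succ k ih =>
    rw [Finset.sum_range_succ, ih]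
    have h1 : 1 ≤ 2 ^ k := Nat.one_le_two_pow
    have h2 : 2 ^ (k + 1) = 2 ^ k * 2 := pow_succ 2 k
    omega

open Classical in
lemma sum_pow_lt_eq (k : ℕ) (hk : k ≤ n) :
    (∑ i : Fin n, if (i : ℕ) < k then 2 ^ (i : ℕ) else 0) = 2 ^ k - 1 := by
  rw [Fin.sum_univ_eq_sum_range (fun j => if j < k then 2 ^ j else 0)]
  have e1 : ∑ j ∈ Finset.range n, (if j < k then 2 ^ j else 0)
      = ∑ j ∈ Finset.range k, (if j < k then 2 ^ j else 0) :=
    (Finset.sum_subset (Finset.range_subset_range.mpr hk)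
      (fun x _ hx => by rw [if_neg (by simpa using hx)])).symm
  rw [e1, Finset.sum_congr rfl (fun x hx => if_pos (Finset.mem_range.mp hx)), geom_two_sum]

open Classical in
lemma sum_pow_le (c : Fin n → Prop) :
    (∑ i : Fin n, if c i then 2 ^ (i : ℕ) else 0) ≤ 2 ^ n - 1 := by
  have h1 : (∑ i : Fin n, if c i then 2 ^ (i : ℕ) else 0)
      ≤ ∑ i : Fin n, if (i : ℕ) < n then 2 ^ (i : ℕ) else 0 := by
    refine Finset.sum_le_sum fun i _ => ?_
    rw [if_pos i.isLt]
    split <;> simp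
  exact le_trans h1 (le_of_eq (sum_pow_lt_eq n le_rfl))

open Classical in
lemma counterValue_conf (b : Fin n → Prop) (p : Fin n) :
    counterValue n (conf n b p) = ∑ i : Fin n, if b i then 2 ^ (i : ℕ) else 0 := by
  unfold counterValue
  refine Finset.sum_congr rfl fun i _ => ?_
  by_cases h : b i
  · rw [if_pos ((mem_conf_c i).mpr h), if_pos h]
  · rw [if_neg (fun hc => h ((mem_conf_c i).mp hc)), if_neg h]

open Classical in
lemma value_step (b : Fin n → Prop) (k : ℕ) (hk : k < n)
    (hlow : ∀ i : Fin n, (i : ℕ) < k → b i) (hbk : ¬ b (k : Fin n)) :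
    (∑ i : Fin n, if (b i ∧ k ≤ (i : ℕ)) ∨ i = (k : Fin n) then 2 ^ (i : ℕ) else 0)
      = (∑ i : Fin n, if b i then 2 ^ (i : ℕ) else 0) + 1 := by
  have hkv : ((k : Fin n)).val = k := by
    rw [Fin.val_natCast]
    exact Nat.mod_eq_of_lt hk
  have key : ∀ i : Fin n,
      (if (b i ∧ k ≤ (i : ℕ)) ∨ i = (k : Fin n) then 2 ^ (i : ℕ) else 0)
        + (if (i : ℕ) < k then 2 ^ (i : ℕ) else 0)
      = (if b i then 2 ^ (i : ℕ) else 0) + (if i = (k : Fin n) then 2 ^ (i : ℕ) else 0) := by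
    intro i
    rcases lt_trichotomy (i : ℕ) k with h | h | h
    · have hik : i ≠ (k : Fin n) := fun he => by rw [he, hkv] at h; omega
      rw [if_neg (by rintro (⟨_, hh⟩ | he); omega; exact hik he), if_pos h,
        if_pos (hlow i h), if_neg hik]
      omega
    · have hik : i = (k : Fin n) := by
        apply Fin.ext
        rw [hkv]
        exact h
      rw [if_pos (Or.inr hik), if_neg (by omega), if_neg (by rwa [hik]), if_pos hik]
      omega
    · have hik : i ≠ (k : Fin n) := fun he => by rw [he, hkv] at h; omega
      rw [if_neg hik]
      by_cases hb : b i
      · rw [if_pos (Or.inl ⟨hb, by omega⟩), if_neg (by omega), if_pos hb]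
      · rw [if_neg (by rintro (⟨hh, _⟩ | he); exact hb hh; exact hik he), if_neg (by omega),
          if_neg hb]
  have hsum : (∑ i : Fin n, if (b i ∧ k ≤ (i : ℕ)) ∨ i = (k : Fin n) then 2 ^ (i : ℕ) else 0)
      + (∑ i : Fin n, if (i : ℕ) < k then 2 ^ (i : ℕ) else 0)
      = (∑ i : Fin n, if b i then 2 ^ (i : ℕ) else 0)
        + (∑ i : Fin n, if i = (k : Fin n) then 2 ^ (i : ℕ) else 0) := by
    rw [← Finset.sum_add_distrib, ← Finset.sum_add_distrib]
    exact Finset.sum_congr rfl fun i _ => key i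
  have hs1 : (∑ i : Fin n, if (i : ℕ) < k then 2 ^ (i : ℕ) else 0) = 2 ^ k - 1 :=
    sum_pow_lt_eq k (le_of_lt hk)
  have hs2 : (∑ i : Fin n, if i = (k : Fin n) then 2 ^ (i : ℕ) else 0) = 2 ^ k := by
    rw [Finset.sum_ite_eq' Finset.univ ((k : Fin n)) (fun i => 2 ^ (i : ℕ))]
    simp [hkv]
  rw [hs1, hs2] at hsum
  have hpow : 1 ≤ 2 ^ k := Nat.one_le_two_pow
  omega

lemma mod_helper (k m : ℕ) (hk : k < n) (hkm : k + m = n) (i : Fin n) :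
    ((i.val + m) % n + k < n) ↔ k ≤ i.val := by
  have hin := i.isLt
  rcases le_or_gt k i.val with h | h
  · have he : i.val + m = (i.val - k) + n := by omega
    rw [he, Nat.add_mod_right, Nat.mod_eq_of_lt (by omega)]
    omega
  · rw [Nat.mod_eq_of_lt (by omega)]
    omega

end Phase2Counter

lemma sum_ite_inst {n : ℕ} {c d : Fin n → Prop} (h : ∀ i, c i ↔ d i)
    (i1 : ∀ i, Decidable (c i)) (i2 : ∀ i, Decidable (d i)) :
    (∑ i : Fin n, @ite ℕ (c i) (i1 i) (2 ^ (i : ℕ)) 0)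
      = ∑ i : Fin n, @ite ℕ (d i) (i2 i) (2 ^ (i : ℕ)) 0 :=
  Finset.sum_congr rfl fun i _ => by
    by_cases hc : c i
    · rw [if_pos hc, if_pos ((h i).mp hc)]
    · rw [if_neg hc, if_neg (fun hd => hc ((h i).mpr hd))]
/-- Applying a cardinality-preserving word of `L_inc` to a
valid configuration of an `n`-bit binary counter increments its value by one,
and this value stays at most `2^n - 1`. -/
theorem counter_increment
    (R : Set (Fin 3 × Fin n)) (hR : ValidConf n R)
    (u : List (PTrans (Fin 3 × Fin n))) (hu : memLinc n u)
    (hcard : (wordApply R u).ncard = R.ncard) :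
    counterValue n (wordApply R u) = counterValue n R + 1 ∧
    counterValue n R + 1 ≤ 2 ^ n - 1 := by
  classical
  have hn : 0 < n := Nat.pos_of_ne_zero (NeZero.ne n)
  obtain ⟨k, m, rfl⟩ := hu
  obtain ⟨p, hRc⟩ := valid_eq_conf hR
  rw [hRc] at hcard ⊢
  obtain ⟨h1, h2⟩ := counter_chain hcard
  have hp0 : p = 0 := sync_pos (counter_total h1)
  subst hp0
  have e0 : pApply (conf n (fun i => cCell n i ∈ R) 0) (syncI n)
      = conf n (fun i => cCell n i ∈ R) 0 :=
    pApply_subid counter_subid_sync (counter_total h1)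
  rw [counter_wordApply_cons, e0]
  rw [e0] at h2
  obtain ⟨hfacts1, heq1, hcard1⟩ :=
    counter_phase1 k (fun i => cCell n i ∈ R) 0
      (incI n :: ((List.replicate m [offI n, rotr n]).flatten ++ [syncI n])) h2
  rw [heq1]
  -- k < n
  have hkn : k < n := by
    by_contra hge
    apply (hfacts1 (n - 1) (by omega)).2
    rw [show n - 1 + 1 = n by omega, Fin.natCast_self, sub_zero]
  -- the increment instruction
  obtain ⟨h3, h4⟩ := counter_chain hcard1
  have hnb1 : ¬ ((fun i : Fin n => cCell n (i + (k : Fin n)) ∈ R ∧ i.val + k < n) 0) :=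
    inc_bit (counter_total h3)
  have hbk : cCell n ((k : Fin n)) ∉ R := by
    intro hbb
    exact hnb1 ⟨by simpa using hbb, by simpa using hkn⟩
  have e_inc := pApply_inc_conf
    (b := fun i : Fin n => cCell n (i + (k : Fin n)) ∈ R ∧ i.val + k < n)
    (p := (0 : Fin n) - (k : Fin n)) hnb1
  rw [counter_wordApply_cons, e_inc]
  rw [e_inc] at h4
  -- phase 2
  obtain ⟨hfacts2, heq2, hcard2⟩ :=
    counter_phase2 m
      (fun i : Fin n => (cCell n (i + (k : Fin n)) ∈ R ∧ i.val + k < n) ∨ i = 0)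
      ((0 : Fin n) - (k : Fin n)) [syncI n] h4
  rw [heq2]
  -- final sync
  obtain ⟨h5, _⟩ := counter_chain hcard2
  have hfin : (0 : Fin n) - (k : Fin n) - (m : Fin n) = 0 := sync_pos (counter_total h5)
  have e_f := pApply_subid (R := conf n
      (fun i : Fin n => ((cCell n ((i + (m : Fin n)) + (k : Fin n)) ∈ R
          ∧ (i + (m : Fin n)).val + k < n) ∨ (i + (m : Fin n)) = 0))
      ((0 : Fin n) - (k : Fin n) - (m : Fin n)))
    counter_subid_sync (counter_total h5)
  rw [counter_wordApply_single, e_f]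
  -- divisibility facts
  have hdvd : n ∣ k + m := by
    have h0 : (0 : Fin n) - (k : Fin n) - (m : Fin n) = -(((k + m : ℕ)) : Fin n) := by
      push_cast; ring
    rw [h0, neg_eq_zero] at hfin
    exact Fin.natCast_eq_zero.mp hfin
  have hnd : ∀ l, l < m → ¬ n ∣ (k + l) := by
    intro l hl hdl
    apply hfacts2 l hl
    have h0 : (0 : Fin n) - (k : Fin n) - (l : Fin n) = -(((k + l : ℕ)) : Fin n) := by
      push_cast; ring
    rw [h0, neg_eq_zero]
    exact Fin.natCast_eq_zero.mpr hdl
  have hcase : (k = 0 ∧ m = 0) ∨ k + m = n := by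
    by_cases hzero : k + m = 0
    · left; omega
    · right
      have hge : n ≤ k + m := Nat.le_of_dvd (by omega) hdvd
      by_contra hne
      exact hnd (n - k) (by omega) ⟨1, by omega⟩
  -- the final configuration
  have hBc : conf n
      (fun i : Fin n => ((cCell n ((i + (m : Fin n)) + (k : Fin n)) ∈ R
          ∧ (i + (m : Fin n)).val + k < n) ∨ (i + (m : Fin n)) = 0))
      ((0 : Fin n) - (k : Fin n) - (m : Fin n))
      = conf n (fun i : Fin n => (cCell n i ∈ R ∧ k ≤ (i : ℕ)) ∨ i = (k : Fin n)) 0 := by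
    rw [hfin]
    refine conf_congr fun i => ?_
    rcases hcase with ⟨rfl, rfl⟩ | hsum
    · simp only [Nat.cast_zero, add_zero]
      simp [i.isLt]
    · have hmk : (m : Fin n) = -(k : Fin n) := by
        have hadd : ((k : Fin n)) + ((m : Fin n)) = 0 := by
          rw [← Nat.cast_add, hsum, Fin.natCast_self]
        exact eq_neg_of_add_eq_zero_right hadd
      have e1 : i + (m : Fin n) + (k : Fin n) = i := by rw [hmk]; ring
      have e2 : (i + (m : Fin n) = 0) ↔ i = (k : Fin n) := by
        rw [hmk, ← sub_eq_add_neg, sub_eq_zero]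
      have e3 : ((i + (m : Fin n)).val + k < n) ↔ k ≤ (i : ℕ) := by
        rw [val_add_natCast]
        exact mod_helper k m hkn hsum i
      rw [e1, e2, e3]
  rw [hBc]
  have hlow : ∀ i : Fin n, (i : ℕ) < k → cCell n i ∈ R := by
    intro i hi
    have := (hfacts1 i.val hi).1
    rwa [Fin.cast_val_eq_self] at this
  have hvs := value_step (fun i => cCell n i ∈ R) k hkn hlow hbk
  have hfst : counterValue n
      (conf n (fun i : Fin n => (cCell n i ∈ R ∧ k ≤ (i : ℕ)) ∨ i = (k : Fin n)) 0)
      = counterValue n (conf n (fun i => cCell n i ∈ R) 0) + 1 := by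
    rw [counterValue_conf, counterValue_conf]
    exact Eq.trans (sum_ite_inst (fun i => Iff.rfl) _ _)
      (hvs.trans (congrArg (· + 1) (sum_ite_inst (fun i => Iff.rfl) _ _)))
  have hbound : counterValue n
      (conf n (fun i : Fin n => (cCell n i ∈ R ∧ k ≤ (i : ℕ)) ∨ i = (k : Fin n)) 0)
      ≤ 2 ^ n - 1 := by
    rw [counterValue_conf]
    exact sum_pow_le _
  refine ⟨hfst, ?_⟩
  rw [← hfst]
  exact hbound
end

section
/- Let N be an n-bit binary counter, let R be a valid configuration of N, and let u ∈ L_dec = ι_sync (ι_inc ι_rotr ι_off)* ι_dec (ι_off ι_rotr)* ι_sync be such that |R·u| = |R|. If v is the value of the counter under R and v′ is the value under R·u, then v′ = v − 1 ≥ 0 (in particular v ≥ 1). -/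
/-! ### The `n`-bit binary counter
Cells: `(0, i) = dᵢ` (tape `S`), `(1, i) = cᵢ` (tape `T`), `(2, i) = c̄ᵢ`
(tape `T̄`). -/

variable (n : ℕ) [NeZero n]

namespace CounterAux

lemma mem_pApply {Q : Type*} {R : Set Q} {f : PTrans Q} {x : Q} :
    x ∈ pApply R f ↔ ∃ q ∈ R, f q = some x := Iff.rfl

lemma wordApply_nil {Q : Type*} (R : Set Q) : wordApply R [] = R := rfl

lemma wordApply_cons {Q : Type*} (R : Set Q) (f : PTrans Q) (u : List (PTrans Q)) :
    wordApply R (f :: u) = wordApply (pApply R f) u := rfl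

lemma wordApply_singleton {Q : Type*} (R : Set Q) (f : PTrans Q) :
    wordApply R [f] = pApply R f := rfl

lemma wordApply_append {Q : Type*} (R : Set Q) (xs ys : List (PTrans Q)) :
    wordApply R (xs ++ ys) = wordApply (wordApply R xs) ys :=
  List.foldl_append

lemma pApply_ncard_le {Q : Type*} [Finite Q] (R : Set Q) (f : PTrans Q) :
    (pApply R f).ncard ≤ R.ncard := by
  have hsub : pApply R f ⊆ (fun q => (f q).getD q) '' R := by
    rintro q' ⟨q, hq, hfq⟩
    exact ⟨q, hq, by simp [hfq]⟩
  calc (pApply R f).ncard ≤ ((fun q => (f q).getD q) '' R).ncard :=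
        Set.ncard_le_ncard hsub (Set.toFinite _)
    _ ≤ R.ncard := Set.ncard_image_le (Set.toFinite R)

lemma wordApply_ncard_le {Q : Type*} [Finite Q] (R : Set Q) (u : List (PTrans Q)) :
    (wordApply R u).ncard ≤ R.ncard := by
  induction u generalizing R with
  | nil => exact le_rfl
  | cons f u ih =>
    rw [wordApply_cons]
    exact le_trans (ih _) (pApply_ncard_le R f)

lemma card_peel {Q : Type*} [Finite Q] {R : Set Q} {f : PTrans Q} {u : List (PTrans Q)}
    (h : (wordApply R (f :: u)).ncard = R.ncard) :
    (pApply R f).ncard = R.ncard ∧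
      (wordApply (pApply R f) u).ncard = (pApply R f).ncard := by
  have h1 := wordApply_ncard_le (pApply R f) u
  have h2 := pApply_ncard_le R f
  rw [wordApply_cons] at h
  omega

lemma card_split {Q : Type*} [Finite Q] {R : Set Q} {xs ys : List (PTrans Q)}
    (h : (wordApply R (xs ++ ys)).ncard = R.ncard) :
    (wordApply R xs).ncard = R.ncard ∧
      (wordApply (wordApply R xs) ys).ncard = (wordApply R xs).ncard := by
  have h1 := wordApply_ncard_le R xs
  have h2 := wordApply_ncard_le (wordApply R xs) ys
  rw [wordApply_append] at h
  omega

lemma lt_of_mem_remove {Q : Type*} [Finite Q] {R S : Set Q} {x : Q}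
    (hx : x ∈ R) (hS : x ∈ S) : (R \ S).ncard < R.ncard :=
  Set.ncard_lt_ncard ((Set.ssubset_iff_of_subset Set.diff_subset).2
    ⟨x, hx, fun h => h.2 hS⟩) (Set.toFinite R)

end CounterAux
namespace CounterAux
set_option linter.unusedSectionVars false
open Fin.NatCast Fin.CommRing

variable (n : ℕ) [NeZero n]

/-- The canonical configuration with head at `j` and bits `b`. -/
def conf (j : Fin n) (b : Fin n → Bool) : Set (Fin 3 × Fin n) :=
  {x | (x.1 = 0 ∧ x.2 = j) ∨ (x.1 = 1 ∧ b x.2 = true) ∨ (x.1 = 2 ∧ b x.2 = false)}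

lemma mem_conf {j : Fin n} {b : Fin n → Bool} {x : Fin 3 × Fin n} :
    x ∈ conf n j b ↔
      (x.1 = 0 ∧ x.2 = j) ∨ (x.1 = 1 ∧ b x.2 = true) ∨ (x.1 = 2 ∧ b x.2 = false) :=
  Iff.rfl

lemma valid_conf {R : Set (Fin 3 × Fin n)} (hR : ValidConf n R) :
    ∃ j b, R = conf n j b := by
  classical
  obtain ⟨⟨j, hj, huniq⟩, hc⟩ := hR
  refine ⟨j, fun i => decide (cCell n i ∈ R), ?_⟩
  ext x
  obtain ⟨t, i⟩ := x
  have h0 : (0 : Fin 3) ≠ 1 := by decide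
  fin_cases t
  · simp only [mem_conf]
    constructor
    · intro h
      exact Or.inl ⟨rfl, huniq i h⟩
    · rintro (⟨-, rfl⟩ | ⟨h, -⟩ | ⟨h, -⟩)
      · exact hj
      · exact absurd h (by decide)
      · exact absurd h (by decide)
  · simp only [mem_conf]
    constructor
    · intro h
      exact Or.inr (Or.inl ⟨rfl, decide_eq_true h⟩)
    · rintro (⟨h, -⟩ | ⟨-, h⟩ | ⟨h, -⟩)
      · exact absurd h (by decide)
      · exact of_decide_eq_true h
      · exact absurd h (by decide)
  · simp only [mem_conf]
    constructor
    · intro h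
      refine Or.inr (Or.inr ⟨rfl, ?_⟩)
      have : cCell n i ∉ R := fun hcc => (hc i).1 hcc (by simpa [cbarCell] using h)
      simpa using this
    · rintro (⟨h, -⟩ | ⟨h, -⟩ | ⟨-, h⟩)
      · exact absurd h (by decide)
      · exact absurd h (by decide)
      · have : cCell n i ∉ R := by simpa using h
        by_contra hmem
        exact this ((hc i).2 (by simpa [cbarCell] using hmem))


lemma pApply_sync (R : Set (Fin 3 × Fin n)) :
    pApply R (syncI n) = R \ {x | x.1 = 0 ∧ x.2 ≠ 0} := by
  ext x
  simp only [mem_pApply, syncI, Set.mem_diff, Set.mem_setOf_eq]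
  constructor
  · rintro ⟨q, hq, hfq⟩
    split_ifs at hfq with h
    injection hfq with hfq
    subst hfq
    exact ⟨hq, h⟩
  · rintro ⟨hx, hx2⟩
    exact ⟨x, hx, by simp [hx2]⟩

lemma pApply_off (R : Set (Fin 3 × Fin n)) :
    pApply R (offI n) = R \ {dCell n 0} := by
  ext x
  simp only [mem_pApply, Set.mem_diff, Set.mem_singleton_iff, offI]
  constructor
  · rintro ⟨q, hq, hfq⟩
    split_ifs at hfq with h
    injection hfq with hfq
    subst hfq
    exact ⟨hq, h⟩
  · rintro ⟨hx, hx2⟩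
    exact ⟨x, hx, by simp [hx2]⟩

lemma sync_step {j : Fin n} {b : Fin n → Bool}
    (h : (pApply (conf n j b) (syncI n)).ncard = (conf n j b).ncard) :
    j = 0 ∧ pApply (conf n j b) (syncI n) = conf n j b := by
  rw [pApply_sync] at h
  have hj : j = 0 := by
    by_contra hj
    have hd : (dCell n j : Fin 3 × Fin n) ∈ conf n j b := Or.inl ⟨rfl, rfl⟩
    have hdP : (dCell n j : Fin 3 × Fin n) ∈ {x : Fin 3 × Fin n | x.1 = 0 ∧ x.2 ≠ 0} :=
      ⟨rfl, hj⟩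
    exact absurd h (Nat.ne_of_lt (lt_of_mem_remove hd hdP))
  subst hj
  refine ⟨rfl, ?_⟩
  rw [pApply_sync]
  ext x
  simp only [Set.mem_diff, Set.mem_setOf_eq, mem_conf]
  constructor
  · rintro ⟨hx, -⟩; exact hx
  · rintro (⟨h1, h2⟩ | ⟨h1, h2⟩ | ⟨h1, h2⟩)
    · exact ⟨Or.inl ⟨h1, h2⟩, fun hc => hc.2 h2⟩
    · exact ⟨Or.inr (Or.inl ⟨h1, h2⟩), fun hc => by rw [h1] at hc; exact absurd hc.1 (by decide)⟩
    · exact ⟨Or.inr (Or.inr ⟨h1, h2⟩), fun hc => by rw [h1] at hc; exact absurd hc.1 (by decide)⟩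

lemma off_step {j : Fin n} {b : Fin n → Bool}
    (h : (pApply (conf n j b) (offI n)).ncard = (conf n j b).ncard) :
    j ≠ 0 ∧ pApply (conf n j b) (offI n) = conf n j b := by
  rw [pApply_off] at h
  have hj : j ≠ 0 := by
    rintro rfl
    have hd : (dCell n 0 : Fin 3 × Fin n) ∈ conf n 0 b := Or.inl ⟨rfl, rfl⟩
    exact absurd h (Nat.ne_of_lt (lt_of_mem_remove hd rfl))
  refine ⟨hj, ?_⟩
  rw [pApply_off]
  apply Set.diff_singleton_eq_self
  rintro (⟨h1, h2⟩ | ⟨h1, h2⟩ | ⟨h1, h2⟩)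
  · exact hj (by simpa [dCell] using h2.symm)
  · exact (by decide : ¬(0 : Fin 3) = 1) h1
  · exact (by decide : ¬(0 : Fin 3) = 2) h1

lemma pApply_rotr (j : Fin n) (b : Fin n → Bool) :
    pApply (conf n j b) (rotr n) = conf n (j - 1) (fun i => b (i + 1)) := by
  ext x
  simp only [mem_pApply, rotr, mem_conf, Option.some_inj]
  constructor
  · rintro ⟨q, hq, rfl⟩
    have hq2 : q.2 - 1 + 1 = q.2 := sub_add_cancel _ _
    rcases hq with ⟨h1, h2⟩ | ⟨h1, h2⟩ | ⟨h1, h2⟩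
    · exact Or.inl ⟨h1, by rw [h2]⟩
    · exact Or.inr (Or.inl ⟨h1, by simpa [hq2] using h2⟩)
    · exact Or.inr (Or.inr ⟨h1, by simpa [hq2] using h2⟩)
  · intro hx
    refine ⟨(x.1, x.2 + 1), ?_, ?_⟩
    · rcases hx with ⟨h1, h2⟩ | ⟨h1, h2⟩ | ⟨h1, h2⟩
      · exact Or.inl ⟨h1, by rw [h2]; exact sub_add_cancel _ _⟩
      · exact Or.inr (Or.inl ⟨h1, h2⟩)
      · exact Or.inr (Or.inr ⟨h1, h2⟩)
    · have : x.2 + 1 - 1 = x.2 := add_sub_cancel_right _ _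
      simp [this]

lemma pApply_inc_false {j : Fin n} {b : Fin n → Bool} (hb : b 0 = false) :
    pApply (conf n j b) (incI n) = conf n j (fun i => if i = 0 then true else b i) := by
  ext x
  simp only [mem_pApply, incI, mem_conf]
  constructor
  · rintro ⟨q, hq, hfq⟩
    split_ifs at hfq with h1 h2
    · injection hfq with hfq
      subst hfq
      exact Or.inr (Or.inl ⟨rfl, by simp [cCell]⟩)
    · injection hfq with hfq
      subst hfq
      rcases hq with ⟨h3, h4⟩ | ⟨h3, h4⟩ | ⟨h3, h4⟩
      · exact Or.inl ⟨h3, h4⟩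
      · refine Or.inr (Or.inl ⟨h3, ?_⟩)
        by_cases h5 : q.2 = 0 <;> simp [h5, h4]
      · refine Or.inr (Or.inr ⟨h3, ?_⟩)
        have h5 : q.2 ≠ 0 := by
          intro h0
          exact h1 (Prod.ext_iff.2 ⟨h3, h0⟩)
        simp [h5, h4]
  · intro hx
    rcases hx with ⟨h1, h2⟩ | ⟨h1, h2⟩ | ⟨h1, h2⟩
    · refine ⟨x, Or.inl ⟨h1, h2⟩, ?_⟩
      rw [if_neg, if_neg]
      · intro h; rw [h] at h1; exact (by decide : ¬(1:Fin 3)=0) h1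
      · intro h; rw [h] at h1; exact (by decide : ¬(2:Fin 3)=0) h1
    · by_cases h0 : x.2 = 0
      · refine ⟨cbarCell n 0, Or.inr (Or.inr ⟨rfl, hb⟩), ?_⟩
        rw [if_pos rfl]
        have hxe : x = cCell n 0 := Prod.ext_iff.2 ⟨h1, h0⟩
        rw [hxe]
    
      · refine ⟨x, Or.inr (Or.inl ⟨h1, by simpa [h0] using h2⟩), ?_⟩
        rw [if_neg, if_neg]
        · intro h; exact h0 (by rw [h]; rfl)
        · intro h; rw [h] at h1; exact (by decide : ¬(2:Fin 3)=1) h1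
    · have h0 : x.2 ≠ 0 := by
        intro h0; rw [if_pos h0] at h2; simp at h2
      refine ⟨x, Or.inr (Or.inr ⟨h1, by simpa [h0] using h2⟩), ?_⟩
      rw [if_neg, if_neg]
      · intro h; rw [h] at h1; exact (by decide : ¬(1:Fin 3)=2) h1
      · intro h; exact h0 (by rw [h]; rfl)

lemma pApply_inc_true {j : Fin n} {b : Fin n → Bool} (hb : b 0 = true) :
    pApply (conf n j b) (incI n) = conf n j b \ {cCell n 0} := by
  ext x
  simp only [mem_pApply, incI, Set.mem_diff, Set.mem_singleton_iff, mem_conf]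
  constructor
  · rintro ⟨q, hq, hfq⟩
    split_ifs at hfq with h1 h2
    · exfalso
      rw [h1] at hq
      rcases hq with ⟨h3, -⟩ | ⟨h3, -⟩ | ⟨-, h4⟩
      · exact (by decide : ¬(2:Fin 3)=0) h3
      · exact (by decide : ¬(2:Fin 3)=1) h3
      · have h5 : b 0 = false := h4
        rw [hb] at h5; simp at h5
    · injection hfq with hfq
      subst hfq
      exact ⟨hq, h2⟩
  · rintro ⟨hx, hxc⟩
    refine ⟨x, hx, ?_⟩
    have hA : ¬ x = cbarCell n 0 := by
      intro h
      subst h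
      rcases hx with ⟨h3, -⟩ | ⟨h3, -⟩ | ⟨-, h4⟩
      · exact (by decide : ¬(2:Fin 3)=0) h3
      · exact (by decide : ¬(2:Fin 3)=1) h3
      · have h5 : b 0 = false := h4
        rw [hb] at h5; simp at h5
    rw [if_neg hA, if_neg hxc]

lemma inc_step {j : Fin n} {b : Fin n → Bool}
    (h : (pApply (conf n j b) (incI n)).ncard = (conf n j b).ncard) :
    b 0 = false ∧
      pApply (conf n j b) (incI n) = conf n j (fun i => if i = 0 then true else b i) := by
  cases hb : b 0 with
  | false => exact ⟨rfl, pApply_inc_false n hb⟩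
  | true =>
    exfalso
    rw [pApply_inc_true n hb] at h
    have hc : (cCell n 0 : Fin 3 × Fin n) ∈ conf n j b := Or.inr (Or.inl ⟨rfl, hb⟩)
    exact absurd h (Nat.ne_of_lt (lt_of_mem_remove hc rfl))

lemma pApply_dec_true {j : Fin n} {b : Fin n → Bool} (hb : b 0 = true) :
    pApply (conf n j b) (decI n) = conf n j (fun i => if i = 0 then false else b i) := by
  ext x
  simp only [mem_pApply, decI, mem_conf]
  constructor
  · rintro ⟨q, hq, hfq⟩
    split_ifs at hfq with h1 h2
    · injection hfq with hfq
      subst hfq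
      exact Or.inr (Or.inr ⟨rfl, by simp [cbarCell]⟩)
    · injection hfq with hfq
      subst hfq
      rcases hq with ⟨h3, h4⟩ | ⟨h3, h4⟩ | ⟨h3, h4⟩
      · exact Or.inl ⟨h3, h4⟩
      · refine Or.inr (Or.inl ⟨h3, ?_⟩)
        have h5 : q.2 ≠ 0 := by
          intro h0
          exact h1 (Prod.ext_iff.2 ⟨h3, h0⟩)
        simp [h5, h4]
      · refine Or.inr (Or.inr ⟨h3, ?_⟩)
        by_cases h5 : q.2 = 0 <;> simp [h5, h4]
  · intro hx
    rcases hx with ⟨h1, h2⟩ | ⟨h1, h2⟩ | ⟨h1, h2⟩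
    · refine ⟨x, Or.inl ⟨h1, h2⟩, ?_⟩
      rw [if_neg, if_neg]
      · intro h; rw [h] at h1; exact (by decide : ¬(2:Fin 3)=0) h1
      · intro h; rw [h] at h1; exact (by decide : ¬(1:Fin 3)=0) h1
    · have h0 : x.2 ≠ 0 := by
        intro h0; rw [if_pos h0] at h2; simp at h2
      refine ⟨x, Or.inr (Or.inl ⟨h1, by simpa [h0] using h2⟩), ?_⟩
      rw [if_neg, if_neg]
      · intro h; rw [h] at h1; exact (by decide : ¬(2:Fin 3)=1) h1
      · intro h; exact h0 (by rw [h]; rfl)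
    · by_cases h0 : x.2 = 0
      · refine ⟨cCell n 0, Or.inr (Or.inl ⟨rfl, hb⟩), ?_⟩
        rw [if_pos rfl]
        have hxe : x = cbarCell n 0 := Prod.ext_iff.2 ⟨h1, h0⟩
        rw [hxe]
      · refine ⟨x, Or.inr (Or.inr ⟨h1, by simpa [h0] using h2⟩), ?_⟩
        rw [if_neg, if_neg]
        · intro h; exact h0 (by rw [h]; rfl)
        · intro h; rw [h] at h1; exact (by decide : ¬(1:Fin 3)=2) h1

lemma pApply_dec_false {j : Fin n} {b : Fin n → Bool} (hb : b 0 = false) :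
    pApply (conf n j b) (decI n) = conf n j b \ {cbarCell n 0} := by
  ext x
  simp only [mem_pApply, decI, Set.mem_diff, Set.mem_singleton_iff, mem_conf]
  constructor
  · rintro ⟨q, hq, hfq⟩
    split_ifs at hfq with h1 h2
    · exfalso
      rw [h1] at hq
      rcases hq with ⟨h3, -⟩ | ⟨-, h4⟩ | ⟨h3, -⟩
      · exact (by decide : ¬(1:Fin 3)=0) h3
      · have h5 : b 0 = true := h4
        rw [hb] at h5; simp at h5
      · exact (by decide : ¬(1:Fin 3)=2) h3
    · injection hfq with hfq
      subst hfq
      exact ⟨hq, h2⟩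
  · rintro ⟨hx, hxc⟩
    refine ⟨x, hx, ?_⟩
    have hA : ¬ x = cCell n 0 := by
      intro h
      subst h
      rcases hx with ⟨h3, -⟩ | ⟨-, h4⟩ | ⟨h3, -⟩
      · exact (by decide : ¬(1:Fin 3)=0) h3
      · have h5 : b 0 = true := h4
        rw [hb] at h5; simp at h5
      · exact (by decide : ¬(1:Fin 3)=2) h3
    rw [if_neg hA, if_neg hxc]

lemma dec_step {j : Fin n} {b : Fin n → Bool}
    (h : (pApply (conf n j b) (decI n)).ncard = (conf n j b).ncard) :
    b 0 = true ∧
      pApply (conf n j b) (decI n) = conf n j (fun i => if i = 0 then false else b i) := by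
  cases hb : b 0 with
  | true => exact ⟨rfl, pApply_dec_true n hb⟩
  | false =>
    exfalso
    rw [pApply_dec_false n hb] at h
    have hc : (cbarCell n 0 : Fin 3 × Fin n) ∈ conf n j b := Or.inr (Or.inr ⟨rfl, hb⟩)
    exact absurd h (Nat.ne_of_lt (lt_of_mem_remove hc rfl))

lemma add_one_cases (x : Fin n) :
    x + 1 = 0 ∨ ((x + 1 : Fin n)).val = x.val + 1 := by
  have hn := x.isLt
  rcases Nat.lt_or_ge (x.val + 1) n with h | h
  · right
    have h2 : 2 ≤ n := by omega
    have : ((x + 1 : Fin n)).val = (x.val + (1 : Fin n).val) % n := by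
      rw [Fin.add_def]
    rw [this, Fin.val_one', Nat.mod_eq_of_lt h2, Nat.mod_eq_of_lt h]
  · left
    have hx : x.val + 1 = n := by omega
    apply Fin.ext
    have : ((x + 1 : Fin n)).val = (x.val + (1 : Fin n).val) % n := by
      rw [Fin.add_def]
    rw [this, Fin.val_one']
    rcases Nat.lt_or_ge 1 n with h1 | h1
    · rw [Nat.mod_eq_of_lt h1, hx, Nat.mod_self]
      rfl
    · have hn1 : n = 1 := by omega
      subst hn1
      simp

lemma val_succ_lt_iff (x : Fin n) (k : ℕ) :
    ((x + 1 : Fin n)).val < k + 1 ↔ (x + 1 = 0 ∨ x.val < k) := by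
  rcases add_one_cases n x with h | h
  · simp [h]
  · have hne : x + 1 ≠ 0 := by
      intro h0
      rw [h0] at h
      simp at h
    rw [h]
    simp only [hne, false_or]
    omega

lemma phaseA : ∀ (k : ℕ) (j : Fin n) (b : Fin n → Bool),
    (wordApply (conf n j b) (List.replicate k [incI n, rotr n, offI n]).flatten).ncard
      = (conf n j b).ncard →
    (∀ t : ℕ, t < k → b (t : Fin n) = false) ∧
    (∀ t : ℕ, 1 ≤ t → t ≤ k → j - (t : Fin n) ≠ 0) ∧
    wordApply (conf n j b) (List.replicate k [incI n, rotr n, offI n]).flatten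
      = conf n (j - (k : Fin n))
          (fun i => if ((i + (k : Fin n) : Fin n)).val < k then true else b (i + (k : Fin n))) := by
  intro k
  induction k with
  | zero =>
    intro j b _
    refine ⟨fun t ht => by omega, fun t h1t h2t => by omega, ?_⟩
    have h0 : (List.replicate 0 [incI n, rotr n, offI n]).flatten = ([] : List (PTrans (Fin 3 × Fin n))) := rfl
    rw [h0, wordApply_nil, Nat.cast_zero, sub_zero]
    congr 1
    funext i
    simp
  | succ k ih =>
    intro j b h
    have hflat : (List.replicate (k+1) [incI n, rotr n, offI n]).flatten
        = incI n :: rotr n :: offI n :: (List.replicate k [incI n, rotr n, offI n]).flatten := by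
      rw [List.replicate_succ, List.flatten_cons]
      rfl
    rw [hflat] at h ⊢
    obtain ⟨h1, h2⟩ := card_peel h
    obtain ⟨hb0, heq1⟩ := inc_step n h1
    rw [heq1] at h2
    rw [wordApply_cons, heq1]
    obtain ⟨h3, h4⟩ := card_peel h2
    rw [pApply_rotr] at h4
    rw [wordApply_cons, pApply_rotr]
    obtain ⟨h5, h6⟩ := card_peel h4
    obtain ⟨hj1, heq3⟩ := off_step n h5
    rw [heq3] at h6
    rw [wordApply_cons, heq3]
    obtain ⟨c1, c2, c3⟩ := ih (j - 1) _ h6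
    refine ⟨?_, ?_, ?_⟩
    · intro t ht
      match t with
      | 0 => exact hb0
      | (s+1) =>
        have hc := c1 s (by omega)
        have hcast : ((s + 1 : ℕ) : Fin n) = (s : Fin n) + 1 := by push_cast; ring
        rw [hcast]
        by_cases h0 : ((s : Fin n) + 1 : Fin n) = 0
        · rw [if_pos h0] at hc
          exact absurd hc (by simp)
        · rwa [if_neg h0] at hc
    · intro t h1t h2t
      match t with
      | 1 =>
        have : ((1 : ℕ) : Fin n) = 1 := by push_cast; ring
        rw [this]
        exact hj1
      | (s+2) =>
        have hc := c2 (s+1) (by omega) (by omega)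
        have hcast : ((s + 2 : ℕ) : Fin n) = ((s+1 : ℕ) : Fin n) + 1 := by push_cast; ring
        rw [hcast]
        intro h0
        apply hc
        rw [← h0]
        ring
    · have hjc : j - 1 - ((k : ℕ) : Fin n) = j - ((k + 1 : ℕ) : Fin n) := by
        push_cast
        ring
      have hcast : ((k + 1 : ℕ) : Fin n) = (k : Fin n) + 1 := by push_cast; ring
      have hbeq : (fun i : Fin n => if ((i + (k : Fin n) : Fin n)).val < k then true
            else if i + (k : Fin n) + 1 = 0 then true else b (i + (k : Fin n) + 1))
          = (fun i : Fin n => if ((i + ((k : Fin n) + 1) : Fin n)).val < k + 1 then true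
            else b (i + ((k : Fin n) + 1))) := by
        funext i
        have hia : i + ((k : Fin n) + 1) = i + (k : Fin n) + 1 := by ring
        rw [hia]
        by_cases hxk : ((i + (k : Fin n) : Fin n)).val < k
        · rw [if_pos hxk, if_pos ((val_succ_lt_iff n _ k).2 (Or.inr hxk))]
        · rw [if_neg hxk]
          by_cases hx0 : i + (k : Fin n) + 1 = 0
          · rw [if_pos hx0, if_pos ((val_succ_lt_iff n _ k).2 (Or.inl hx0))]
          · rw [if_neg hx0, if_neg (fun hlt => by
              rcases (val_succ_lt_iff n _ k).1 hlt with hh | hh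
              exacts [hx0 hh, hxk hh])]
      rw [c3, hjc, hcast, hbeq]

lemma phaseB : ∀ (m : ℕ) (j : Fin n) (b : Fin n → Bool),
    (wordApply (conf n j b) (List.replicate m [offI n, rotr n]).flatten).ncard
      = (conf n j b).ncard →
    (∀ s : ℕ, s < m → j - (s : Fin n) ≠ 0) ∧
    wordApply (conf n j b) (List.replicate m [offI n, rotr n]).flatten
      = conf n (j - (m : Fin n)) (fun i => b (i + (m : Fin n))) := by
  intro m
  induction m with
  | zero =>
    intro j b _
    refine ⟨fun s hs => by omega, ?_⟩
    have h0 : (List.replicate 0 [offI n, rotr n]).flatten = ([] : List (PTrans (Fin 3 × Fin n))) := rfl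
    rw [h0, wordApply_nil, Nat.cast_zero, sub_zero]
    congr 1
    funext i
    simp
  | succ m ih =>
    intro j b h
    have hflat : (List.replicate (m+1) [offI n, rotr n]).flatten
        = offI n :: rotr n :: (List.replicate m [offI n, rotr n]).flatten := by
      rw [List.replicate_succ, List.flatten_cons]
      rfl
    rw [hflat] at h ⊢
    obtain ⟨h1, h2⟩ := card_peel h
    obtain ⟨hj0, heq1⟩ := off_step n h1
    rw [heq1] at h2
    rw [wordApply_cons, heq1]
    obtain ⟨h3, h4⟩ := card_peel h2
    rw [pApply_rotr] at h4
    rw [wordApply_cons, pApply_rotr]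
    obtain ⟨c1, c2⟩ := ih (j - 1) _ h4
    refine ⟨?_, ?_⟩
    · intro s hs
      match s with
      | 0 => simpa using hj0
      | (s+1) =>
        have hc := c1 s (by omega)
        have hcast : ((s + 1 : ℕ) : Fin n) = ((s : ℕ) : Fin n) + 1 := by push_cast; ring
        rw [hcast]
        intro h0
        apply hc
        rw [← h0]
        ring
    · have hjc : j - 1 - ((m : ℕ) : Fin n) = j - ((m + 1 : ℕ) : Fin n) := by
        push_cast
        ring
      have hcast : ((m + 1 : ℕ) : Fin n) = (m : Fin n) + 1 := by push_cast; ring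
      have hbeq : (fun i : Fin n => b (i + (m : Fin n) + 1))
          = (fun i : Fin n => b (i + ((m : Fin n) + 1))) := by
        funext i
        congr 1
        ring
      rw [c2, hjc, hcast, hbeq]

lemma counterValue_conf (j : Fin n) (b : Fin n → Bool) :
    counterValue n (conf n j b) = ∑ i : Fin n, if b i = true then 2 ^ (i : ℕ) else 0 := by
  unfold counterValue
  apply Finset.sum_congr rfl
  intro i _
  have hmem : cCell n i ∈ conf n j b ↔ b i = true := by
    constructor
    · rintro (⟨h1, -⟩ | ⟨-, h2⟩ | ⟨h1, -⟩)
      · exact ((by decide : ¬(1 : Fin 3) = 0) h1).elim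
      · exact h2
      · exact ((by decide : ¬(1 : Fin 3) = 2) h1).elim
    · intro h
      exact Or.inr (Or.inl ⟨rfl, h⟩)
  simp [hmem]

lemma geom_sum_two (k : ℕ) : (∑ j ∈ Finset.range k, 2 ^ j) + 1 = 2 ^ k := by
  induction k with
  | zero => simp
  | succ k ih =>
    rw [Finset.sum_range_succ, pow_succ]
    omega

lemma value_sum (k : ℕ) (hk : k < n) (b₀ c : Fin n → Bool)
    (h0 : ∀ t : ℕ, t < k → b₀ ((t : ℕ) : Fin n) = false)
    (hks : b₀ ((k : ℕ) : Fin n) = true)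
    (hc : ∀ i : Fin n, c i = if i = ((k : ℕ) : Fin n) then false
      else if (i : ℕ) < k then true else b₀ i) :
    (∑ i : Fin n, if c i = true then 2 ^ (i : ℕ) else 0) + 1
      = ∑ i : Fin n, if b₀ i = true then 2 ^ (i : ℕ) else 0 := by
  have hrw : ∀ (f : Fin n → Bool),
      (∑ i : Fin n, if f i = true then 2 ^ (i : ℕ) else 0)
        = ∑ i ∈ Finset.range n, (fun j : ℕ => if f ((j : ℕ) : Fin n) = true then 2 ^ j else 0) i := by
    intro f
    rw [← Fin.sum_univ_eq_sum_range (fun j : ℕ => if f ((j : ℕ) : Fin n) = true then 2 ^ j else 0) n]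
    apply Finset.sum_congr rfl
    intro i _
    rw [Fin.cast_val_eq_self]
  rw [hrw c, hrw b₀]
  have hsplit : ∀ (f : ℕ → ℕ), (∑ j ∈ Finset.range n, f j)
      = (∑ j ∈ Finset.range (k + 1), f j) + ∑ j ∈ Finset.Ico (k + 1) n, f j := by
    intro f
    rw [Finset.range_eq_Ico, ← Finset.sum_Ico_consecutive _ (Nat.zero_le _) (by omega : k + 1 ≤ n),
      ← Finset.range_eq_Ico]
  rw [hsplit, hsplit]
  have htail : (∑ j ∈ Finset.Ico (k + 1) n, if c ((j : ℕ) : Fin n) = true then 2 ^ j else 0)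
      = ∑ j ∈ Finset.Ico (k + 1) n, if b₀ ((j : ℕ) : Fin n) = true then 2 ^ j else 0 := by
    apply Finset.sum_congr rfl
    intro j hj
    rw [Finset.mem_Ico] at hj
    have hj1 : ((j : ℕ) : Fin n).val = j := Fin.val_cast_of_lt hj.2
    have hjk : ((j : ℕ) : Fin n) ≠ ((k : ℕ) : Fin n) := by
      intro h
      have := congrArg Fin.val h
      rw [hj1, Fin.val_cast_of_lt hk] at this
      omega
    rw [hc, if_neg hjk, if_neg (by omega : ¬ ((j : ℕ) : Fin n).val < k)]
  rw [htail]
  have hheadc : (∑ j ∈ Finset.range (k + 1), if c ((j : ℕ) : Fin n) = true then 2 ^ j else 0)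
      = ∑ j ∈ Finset.range k, 2 ^ j := by
    have hlast : (if c ((k : ℕ) : Fin n) = true then 2 ^ k else 0) = 0 := by
      rw [hc, if_pos rfl]
      simp
    rw [Finset.sum_range_succ, hlast, add_zero]
    apply Finset.sum_congr rfl
    intro j hj
    rw [Finset.mem_range] at hj
    have hj1 : ((j : ℕ) : Fin n).val = j := Fin.val_cast_of_lt (by omega)
    have hjk : ((j : ℕ) : Fin n) ≠ ((k : ℕ) : Fin n) := by
      intro h
      have := congrArg Fin.val h
      rw [hj1, Fin.val_cast_of_lt hk] at this
      omega
    rw [hc, if_neg hjk, if_pos (by omega : ((j : ℕ) : Fin n).val < k)]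
    simp
  have hheadb : (∑ j ∈ Finset.range (k + 1), if b₀ ((j : ℕ) : Fin n) = true then 2 ^ j else 0)
      = 2 ^ k := by
    rw [Finset.sum_range_succ, hks, if_pos rfl]
    have hz : (∑ j ∈ Finset.range k, if b₀ ((j : ℕ) : Fin n) = true then 2 ^ j else 0) = 0 :=
      Finset.sum_eq_zero (fun j hj => by rw [h0 j (Finset.mem_range.1 hj)]; simp)
    rw [hz, zero_add]
  rw [hheadc, hheadb]
  have := geom_sum_two k
  omega

end CounterAux

open CounterAux
open Fin.NatCast Fin.CommRing

/-- Applying a cardinality-preserving word of `L_dec` to a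
valid configuration of an `n`-bit binary counter decrements its value by one;
in particular the value before was at least `1`. -/
theorem counter_decrement
    (R : Set (Fin 3 × Fin n)) (hR : ValidConf n R)
    (u : List (PTrans (Fin 3 × Fin n))) (hu : memLdec n u)
    (hcard : (wordApply R u).ncard = R.ncard) :
    1 ≤ counterValue n R ∧
    counterValue n (wordApply R u) = counterValue n R - 1 := by
  obtain ⟨k, m, rfl⟩ := hu
  obtain ⟨j₀, b₀, rfl⟩ := valid_conf n hR
  -- first sync
  obtain ⟨hs1, hrest1⟩ := card_peel hcard
  obtain ⟨hj0, hsync1⟩ := sync_step n hs1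
  subst hj0
  rw [hsync1] at hrest1
  rw [wordApply_cons, hsync1]
  -- phase A
  obtain ⟨hA1, hA2⟩ := card_split hrest1
  obtain ⟨hbits0, hoffA, heqA⟩ := phaseA n k 0 b₀ hA1
  rw [heqA] at hA2
  rw [wordApply_append, heqA]
  -- dec
  obtain ⟨hd1, hd2⟩ := card_peel hA2
  obtain ⟨hbit_k, heqdec⟩ := dec_step n hd1
  rw [heqdec] at hd2
  rw [wordApply_cons, heqdec]
  -- phase B
  obtain ⟨hB1, hB2⟩ := card_split hd2
  obtain ⟨hoffB, heqB⟩ := phaseB n m _ _ hB1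
  rw [heqB] at hB2
  rw [wordApply_append, heqB]
  -- final sync
  rw [wordApply_singleton] at hB2
  rw [wordApply_singleton]
  obtain ⟨hjB, heqS⟩ := sync_step n hB2
  rw [heqS]
  -- arithmetic facts
  have hkm : ((k + m : ℕ) : Fin n) = 0 := by
    have h := hjB
    push_cast at h ⊢
    linear_combination -h
  have hk_lt : k < n := by
    by_contra hcon
    push_neg at hcon
    have h1 : 1 ≤ n := Nat.one_le_iff_ne_zero.2 (NeZero.ne n)
    apply hoffA n h1 hcon
    rw [Fin.natCast_self]
    ring
  have hmk : ((m : ℕ) : Fin n) = -((k : ℕ) : Fin n) := by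
    have h := hkm
    push_cast at h
    linear_combination h
  have hbk : b₀ ((k : ℕ) : Fin n) = true := by
    have h := hbit_k
    simp only [zero_add] at h
    rwa [if_neg (by rw [Fin.val_cast_of_lt hk_lt]; omega)] at h
  -- final bits
  have hbB : ∀ i : Fin n,
      (if i + (m : Fin n) = 0 then false
          else if ((i + (m : Fin n) + (k : Fin n) : Fin n)).val < k then true
          else b₀ (i + (m : Fin n) + (k : Fin n)))
      = if i = ((k : ℕ) : Fin n) then false
        else if (i : ℕ) < k then true else b₀ i := by
    intro i
    have him : i + ((m : ℕ) : Fin n) = i - ((k : ℕ) : Fin n) := by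
      rw [hmk]
      ring
    rw [him]
    have h1 : (i - ((k : ℕ) : Fin n) = 0) ↔ i = ((k : ℕ) : Fin n) := sub_eq_zero
    have h2 : i - ((k : ℕ) : Fin n) + ((k : ℕ) : Fin n) = i := sub_add_cancel _ _
    rw [h2]
    by_cases h3 : i = ((k : ℕ) : Fin n)
    · rw [if_pos (h1.2 h3), if_pos h3]
    · rw [if_neg (fun hh => h3 (h1.1 hh)), if_neg h3]
  -- value computation
  rw [counterValue_conf, counterValue_conf]
  have key := value_sum n k hk_lt b₀
    (fun i => if i + (m : Fin n) = 0 then false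
      else if ((i + (m : Fin n) + (k : Fin n) : Fin n)).val < k then true
      else b₀ (i + (m : Fin n) + (k : Fin n))) hbits0 hbk hbB
  constructor
  · omega
  · omega
end
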